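/- Let O be a discrete valuation ring with fraction field F, and let B be a nonzero O-algebra that is finite and flat as an O-module. Then there exists an O-algebra homomorphism from B to the integral closure Ō of O in an algebraic closure F̄ of F. -/

import Mathlib

set_option maxHeartbeats 1000000
set_option synthInstance.maxHeartbeats 400000
/-- Let `O` be a discrete valuation ring with fraction field `F`, `F̄` an
algebraic closure of `F` and `Ō` the integral closure of `O` in `F̄`. Every
nonzero `O`-algebra `B` that is finite and flat as an `O`-module admits an
`O`-algebra homomorphism to `Ō`, i.e. `Spec B` has an `Ō`-point over `O`. -/
theorem exists_point_in_integral_closure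
    (O : Type) [CommRing O] [IsDomain O] [IsDiscreteValuationRing O]
    (B : Type) [CommRing B] [Nontrivial B] [Algebra O B]
    [Module.Finite O B] [Module.Flat O B] :
    Nonempty (B →ₐ[O] (integralClosure O (AlgebraicClosure (FractionRing O)))) := by
  classical
  let F := FractionRing O
  let K := AlgebraicClosure F
  haveI : Module.FinitePresentation O B := Module.finitePresentation_of_finite O B
  haveI : Module.Free O B := Module.free_of_flat_of_isLocalRing
  haveI : Module.FaithfullyFlat O B := inferInstance
  let C := TensorProduct O K B
  haveI : Nontrivial C := Module.FaithfullyFlat.rTensor_nontrivial O B K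
  obtain ⟨m, hm⟩ := Ideal.exists_maximal C
  haveI := hm
  haveI : Module.Finite K (C ⧸ m) := Module.Finite.of_surjective
    (Ideal.Quotient.mkₐ K m).toLinearMap (Ideal.Quotient.mk_surjective)
  haveI : Algebra.IsAlgebraic K (C ⧸ m) := Algebra.IsAlgebraic.of_finite K _
  haveI : IsDomain (C ⧸ m) := Ideal.Quotient.isDomain m
  haveI : NoZeroSMulDivisors K (C ⧸ m) :=
    inferInstance
  let ψ : (C ⧸ m) →ₐ[K] K := IsAlgClosed.lift
  let φ : B →ₐ[O] K :=
    ((ψ.restrictScalars O).comp ((Ideal.Quotient.mkₐ K m).restrictScalars O)).comp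
      (Algebra.TensorProduct.includeRight)
  haveI : Algebra.IsIntegral O B := Algebra.IsIntegral.of_finite O B
  refine ⟨φ.codRestrict (integralClosure O K) fun b => ?_⟩
  exact (Algebra.IsIntegral.isIntegral b).map φ
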